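/- Let l > 0 and q > 1, and set γ = 2q - 1. Define H : ℝ≥0 → ℝ by H(t) = t^γ for 0 ≤ t ≤ l and H(t) = l^{q-1}(q l^{q-1} t - (q-1) l^q) for t > l, and F : ℝ≥0 → ℝ by F(t) = t^q for 0 ≤ t ≤ l and F(t) = q l^{q-1} t - (q-1) l^q for t > l. Then for all t ∈ ℝ≥0 with t ≠ l: q·H(t) = F(t)·F'(t), (F'(t))² ≤ q·H'(t), and F(t)² ≥ t·H(t). -/
import Mathlib


/-- Properties of the truncation functions `H` and `F` used in the Moser iteration
argument: for `l > 0`, `q > 1`, `γ = 2q - 1`, and all `t ≥ 0` with `t ≠ l`,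
`q·H(t) = F(t)·F'(t)`, `(F'(t))² ≤ q·H'(t)` and `F(t)² ≥ t·H(t)`. -/
theorem stmt1 (l q γ : ℝ) (hl : 0 < l) (hq : 1 < q) (hγ : γ = 2 * q - 1)
    (H F : ℝ → ℝ)
    (hH : ∀ t : ℝ, (t ≤ l → H t = t ^ γ) ∧
      (l < t → H t = l ^ (q - 1) * (q * l ^ (q - 1) * t - (q - 1) * l ^ q)))
    (hF : ∀ t : ℝ, (t ≤ l → F t = t ^ q) ∧
      (l < t → F t = q * l ^ (q - 1) * t - (q - 1) * l ^ q)) :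
    ∀ t : ℝ, 0 ≤ t → t ≠ l →
      q * H t = F t * deriv F t ∧
      (deriv F t) ^ 2 ≤ q * deriv H t ∧
      t * H t ≤ (F t) ^ 2 := by
  intro t ht0 htl
  rcases lt_or_gt_of_ne htl with h | h
  · -- t < l
    have hFeq : F =ᶠ[nhds t] fun x => x ^ q :=
      Filter.eventuallyEq_of_mem (Iio_mem_nhds h) fun x hx => (hF x).1 (le_of_lt hx)
    have hHeq : H =ᶠ[nhds t] fun x => x ^ γ :=
      Filter.eventuallyEq_of_mem (Iio_mem_nhds h) fun x hx => (hH x).1 (le_of_lt hx)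
    have hFd : deriv F t = q * t ^ (q - 1) := by
      rw [hFeq.deriv_eq, (Real.hasDerivAt_rpow_const (Or.inr hq.le)).deriv]
    have hHd : deriv H t = γ * t ^ (γ - 1) := by
      rw [hHeq.deriv_eq,
        (Real.hasDerivAt_rpow_const (Or.inr (by nlinarith : (1:ℝ) ≤ γ))).deriv]
    have hFt : F t = t ^ q := (hF t).1 h.le
    have hHt : H t = t ^ γ := (hH t).1 h.le
    rcases eq_or_lt_of_le ht0 with h0 | h0
    · rw [hFt, hHt, hFd, hHd, ← h0]
      rw [Real.zero_rpow (by nlinarith : γ ≠ 0),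
          Real.zero_rpow (by nlinarith : q ≠ 0),
          Real.zero_rpow (by nlinarith : q - 1 ≠ 0),
          Real.zero_rpow (by nlinarith : γ - 1 ≠ 0)]
      norm_num
    · have hpow : ∀ a b : ℝ, t ^ a * t ^ b = t ^ (a + b) :=
        fun a b => (Real.rpow_add h0 a b).symm
      refine ⟨?_, ?_, ?_⟩
      · rw [hFt, hHt, hFd]
        rw [show t ^ q * (q * t ^ (q-1)) = q * (t ^ q * t ^ (q-1)) by ring, hpow]
        rw [show q + (q - 1) = γ by linarith]
      · rw [hFd, hHd]
        rw [show (q * t ^ (q-1))^2 = q^2 * (t^(q-1) * t^(q-1)) by ring, hpow]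
        rw [show q * (γ * t ^ (γ-1)) = q * γ * t ^ (γ-1) by ring]
        rw [show q - 1 + (q - 1) = γ - 1 by linarith]
        have h1 : (0:ℝ) ≤ t ^ (γ - 1) := (Real.rpow_pos_of_pos h0 _).le
        have h2 : q ^ 2 ≤ q * γ := by nlinarith
        exact mul_le_mul_of_nonneg_right h2 h1
      · rw [hFt, hHt]
        rw [show (t ^ q)^2 = t^q * t^q by ring, hpow]
        nth_rewrite 1 [show t = t ^ (1:ℝ) by rw [Real.rpow_one]]
        rw [hpow, show (1:ℝ) + γ = q + q by linarith]
  · -- l < t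
    have hFeq : F =ᶠ[nhds t] fun x => q * l ^ (q-1) * x - (q-1) * l ^ q :=
      Filter.eventuallyEq_of_mem (Ioi_mem_nhds h) fun x hx => (hF x).2 hx
    have hHeq : H =ᶠ[nhds t]
        fun x => l ^ (q-1) * (q * l ^ (q-1) * x - (q-1) * l ^ q) :=
      Filter.eventuallyEq_of_mem (Ioi_mem_nhds h) fun x hx => (hH x).2 hx
    have hFd : deriv F t = q * l ^ (q - 1) := by
      rw [hFeq.deriv_eq]
      have : HasDerivAt (fun x : ℝ => q * l ^ (q-1) * x - (q-1) * l ^ q)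
          (q * l ^ (q-1)) t := by
        simpa using ((hasDerivAt_id t).const_mul (q * l ^ (q-1))).sub_const
          ((q-1) * l ^ q)
      exact this.deriv
    have hHd : deriv H t = l ^ (q-1) * (q * l ^ (q - 1)) := by
      rw [hHeq.deriv_eq]
      have : HasDerivAt (fun x : ℝ =>
          l ^ (q-1) * (q * l ^ (q-1) * x - (q-1) * l ^ q))
          (l ^ (q-1) * (q * l ^ (q-1))) t := by
        have h1 : HasDerivAt (fun x : ℝ => q * l ^ (q-1) * x - (q-1) * l ^ q)
            (q * l ^ (q-1)) t := by
          simpa using ((hasDerivAt_id t).const_mul (q * l ^ (q-1))).sub_const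
            ((q-1) * l ^ q)
        exact h1.const_mul _
      exact this.deriv
    have hFt : F t = q * l ^ (q-1) * t - (q-1) * l ^ q := (hF t).2 h
    have hHt : H t = l ^ (q-1) * (q * l ^ (q-1) * t - (q-1) * l ^ q) := (hH t).2 h
    have hlq : l ^ q = l ^ (q-1) * l := by
      rw [← Real.rpow_add_one hl.ne' (q-1)]; ring_nf
    have hlp : (0:ℝ) < l ^ (q-1) := Real.rpow_pos_of_pos hl _
    refine ⟨by rw [hFt, hHt, hFd]; ring, by rw [hFd, hHd]; ring_nf; exact le_refl _, ?_⟩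
    · rw [hFt, hHt, hlq]
      set A := q * l ^ (q-1) * t - (q-1) * (l ^ (q-1) * l) with hA
      have hB : t * l ^ (q-1) ≤ A := by
        nlinarith [mul_nonneg (mul_nonneg (by linarith : (0:ℝ) ≤ q - 1) hlp.le)
          (by linarith : (0:ℝ) ≤ t - l)]
      have hA' : 0 ≤ A := le_trans (mul_nonneg ht0 hlp.le) hB
      nlinarith [mul_le_mul_of_nonneg_right hB hA']
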